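/- For every choice of positive integers c, n, κ with m ≥ n + κ + 4 and d ≥ 8c, the following union bound holds: ∑_{i=2}^{2^κ} C(2^{cn}, i) · C(d·2^m, ⌈(3/4)d·i⌉) · ((3/4)d·i/(d·2^m))^{d·i} ≤ 2^{−2cn}, where C(a,b) denotes the binomial coefficient. -/

import Mathlib

set_option maxHeartbeats 1000000

open Finset Real


-- Stirling lower bound for factorial
lemma my_stirling (k : ℕ) (hk : 0 < k) :
    Real.sqrt (2 * π * k) * ((k : ℝ) / Real.exp 1) ^ k ≤ (Nat.factorial k : ℝ) := by
  obtain ⟨j, rfl⟩ : ∃ j, k = j + 1 := ⟨k - 1, (Nat.succ_pred_eq_of_pos hk).symm⟩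
  have ht : Filter.Tendsto (Stirling.stirlingSeq ∘ Nat.succ) Filter.atTop
      (nhds (Real.sqrt π)) :=
    Stirling.tendsto_stirlingSeq_sqrt_pi.comp (Filter.tendsto_add_atTop_nat 1)
  have h1 : Real.sqrt π ≤ Stirling.stirlingSeq (j + 1) :=
    Stirling.stirlingSeq'_antitone.le_of_tendsto ht j
  rw [Stirling.stirlingSeq] at h1
  have hden : 0 < Real.sqrt (2 * ((j:ℝ)+1)) * ((((j:ℝ))+1) / Real.exp 1) ^ (j+1) := by
    positivity
  have hden' : 0 < Real.sqrt (2 * (((j+1):ℕ):ℝ)) * (((((j+1):ℕ)):ℝ) / Real.exp 1) ^ (j+1) := by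
    push_cast; exact hden
  rw [le_div_iff₀ hden'] at h1
  calc Real.sqrt (2 * π * ((j+1):ℕ)) * ((((j+1):ℕ) : ℝ) / Real.exp 1) ^ (j+1)
      = Real.sqrt π * (Real.sqrt (2 * (((j+1):ℕ):ℝ)) * (((((j+1):ℕ)):ℝ) / Real.exp 1) ^ (j+1)) := by
        rw [show (2 * π * (((j+1):ℕ):ℝ)) = π * (2 * (((j+1):ℕ):ℝ)) by push_cast; ring,
          Real.sqrt_mul pi_pos.le]
        ring
    _ ≤ (Nat.factorial (j+1) : ℝ) := h1


lemma my_two_pow_le_factorial : ∀ i : ℕ, 2 ^ (i - 1) ≤ Nat.factorial i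
  | 0 => by simp
  | 1 => by simp [Nat.factorial]
  | (i+2) => by
      have h := my_two_pow_le_factorial (i+1)
      calc 2 ^ (i + 2 - 1) = 2 * 2 ^ (i + 1 - 1) := by
            simp [pow_succ]; ring
        _ ≤ (i + 2) * Nat.factorial (i+1) := Nat.mul_le_mul (by omega) h
        _ = Nat.factorial (i + 2) := rfl

-- ceil lemma
lemma my_ceil_eq (d i : ℕ) (h16 : 16 ≤ d * i) :
    Nat.ceil ((3 / 4 : ℝ) * d * i) = 3 * (d * i / 4) + d * i % 4 := by
  set q := d * i / 4 with hq
  set r := d * i % 4 with hr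
  have hqr : 4 * q + r = d * i := Nat.div_add_mod _ _
  have hr4 : r < 4 := Nat.mod_lt _ (by norm_num)
  have hq4 : 4 ≤ q := by omega
  have h' : (d:ℝ) * i = 4 * q + r := by exact_mod_cast hqr.symm
  rw [Nat.ceil_eq_iff (by omega)]
  constructor
  · have h1 : ((3 * q + r - 1 : ℕ) : ℝ) = 3 * q + r - 1 := by
      push_cast [Nat.cast_sub (by omega : 1 ≤ 3 * q + r)]; ring
    rw [h1, mul_assoc, h']
    have : (r : ℝ) < 4 := by exact_mod_cast hr4
    nlinarith
  · rw [mul_assoc, h']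
    have : (0:ℝ) ≤ r := by positivity
    push_cast
    nlinarith

lemma my_geo : ∀ M : ℕ, (∑ i ∈ Finset.Icc 2 M, ((1:ℝ)/2)^(i-1)) ≤ 1 - (1/2)^(M-1)
  | 0 => by simp
  | 1 => by
      rw [Finset.Icc_eq_empty (by omega)]
      norm_num
  | (M+2) => by
      have h := my_geo (M+1)
      rw [Finset.sum_Icc_succ_top (by omega : 2 ≤ M+2)]
      have e1 : M + 1 - 1 = M := rfl
      have e2 : M + 2 - 1 = M + 1 := rfl
      rw [e1] at h
      rw [e2]
      have : ((1:ℝ)/2)^(M+1) = (1/2)^M * (1/2) := pow_succ _ _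
      linarith


lemma per_term (c n κ m d i : ℕ) (hc : 0 < c) (hn : 0 < n) (hκ : 0 < κ)
    (hm : n + κ + 4 ≤ m) (hd : 8 * c ≤ d) (hi2 : 2 ≤ i) (hiκ : i ≤ 2 ^ κ) :
    (Nat.choose (2 ^ (c * n)) i : ℝ)
      * (Nat.choose (d * 2 ^ m) (Nat.ceil ((3 / 4 : ℝ) * d * i)) : ℝ)
      * (((3 / 4 : ℝ) * d * i) / ((d : ℝ) * 2 ^ m)) ^ (d * i)
    ≤ ((2:ℝ) ^ (2 * (c * n)))⁻¹ * (1/2) ^ (i - 1) := by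
  have hd8 : 8 ≤ d := le_trans (by omega) hd
  have h16 : 16 ≤ d * i := by calc 16 = 8 * 2 := rfl
                                _ ≤ d * i := Nat.mul_le_mul hd8 hi2
  set q := d * i / 4 with hqdef
  set r := d * i % 4 with hrdef
  have hqr : 4 * q + r = d * i := Nat.div_add_mod _ _
  have hr4 : r < 4 := Nat.mod_lt _ (by norm_num)
  have hq4 : 4 ≤ q := by omega
  have hKceil : Nat.ceil ((3 / 4 : ℝ) * d * i) = 3 * q + r := my_ceil_eq d i h16
  set K := 3 * q + r with hKdef
  have hKL : K + q = d * i := by omega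
  have hKpos : 0 < K := by omega
  have hK12 : 12 ≤ K := by omega
  -- L ≥ 2ci
  have h8ci : 8 * c * i ≤ d * i := Nat.mul_le_mul_right i hd
  have h2ciq : 2 * (c * i) ≤ q := by
    have haux : ∀ D E Q R : ℕ, 4 * Q + R = D → 8 * E ≤ D → R < 4 → 2 * E ≤ Q := by
      intro D E Q R h1 h2 h3; omega
    exact haux (d * i) (c * i) q r hqr (by linarith [h8ci, Nat.mul_assoc 8 c i]) hr4
  -- real positivity
  have hd0 : (0:ℝ) < d := by exact_mod_cast Nat.lt_of_lt_of_le (by norm_num) hd8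
  have hi0 : (0:ℝ) < i := by exact_mod_cast Nat.lt_of_lt_of_le (by norm_num) hi2
  have h2m : (0:ℝ) < 2 ^ m := by positivity
  set x : ℝ := ((3 / 4 : ℝ) * d * i) / ((d : ℝ) * 2 ^ m) with hxdef
  have hx_pos : 0 < x := div_pos (by positivity) (by positivity)
  have hl2 : (0.6931471803 : ℝ) < Real.log 2 := Real.log_two_gt_d9
  -- log x bound
  have hx_log : Real.log x ≤ -3 - n * Real.log 2 := by
    have hxeq : x = (3/4 * i) * ((2:ℝ)^m)⁻¹ := by
      rw [hxdef]; field_simp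
    rw [hxeq, Real.log_mul (by positivity) (by positivity), Real.log_inv, Real.log_pow,
      Real.log_mul (by norm_num) (ne_of_gt hi0)]
    have hlog34 : Real.log (3/4) ≤ -1/4 := by
      have := Real.log_le_sub_one_of_pos (show (0:ℝ) < 3/4 by norm_num)
      linarith
    have hlogi : Real.log i ≤ κ * Real.log 2 := by
      calc Real.log i ≤ Real.log ((2:ℝ)^κ) := by
            apply Real.log_le_log hi0
            exact_mod_cast hiκ
        _ = κ * Real.log 2 := by rw [Real.log_pow]
    have hmR : (n:ℝ) + κ + 4 ≤ m := by exact_mod_cast hm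
    have hn1 : (1:ℝ) ≤ n := by exact_mod_cast hn
    nlinarith [hl2]
  -- choose 1 bound
  have hc1 : (Nat.choose (2 ^ (c * n)) i : ℝ) ≤ (2:ℝ) ^ (c * n * i) / 2 ^ (i - 1) := by
    calc (Nat.choose (2 ^ (c * n)) i : ℝ) ≤ ((2 ^ (c*n) : ℕ) : ℝ) ^ i / (Nat.factorial i : ℝ) :=
          Nat.choose_le_pow_div i (2 ^ (c*n))
      _ ≤ (2:ℝ) ^ (c * n * i) / 2 ^ (i - 1) := by
          rw [show ((2 ^ (c*n) : ℕ) : ℝ) ^ i = (2:ℝ) ^ (c * n * i) by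
            push_cast; rw [← pow_mul]]
          gcongr
          exact_mod_cast my_two_pow_le_factorial i
  -- choose 2 bound
  have hst := my_stirling K hKpos
  have hKR : (0:ℝ) < K := by exact_mod_cast hKpos
  have hsqS : 0 < Real.sqrt (2 * π * K) := Real.sqrt_pos.2 (by positivity)
  have hNx : ((d * 2 ^ m : ℕ) : ℝ) * x = (3/4 : ℝ) * d * i := by
    rw [hxdef]; push_cast; field_simp
  have hxK : (3/4 : ℝ) * d * i ≤ K := by
    rw [← hKceil]; exact Nat.le_ceil _
  have hc2 : (Nat.choose (d * 2 ^ m) K : ℝ) * x ^ K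
      ≤ Real.exp 1 ^ K / Real.sqrt (2 * π * K) := by
    have hb1 : (Nat.choose (d * 2 ^ m) K : ℝ)
        ≤ ((d * 2 ^ m : ℕ) : ℝ) ^ K / (Nat.factorial K : ℝ) :=
      Nat.choose_le_pow_div K (d * 2 ^ m)
    have hb2 : ((d * 2 ^ m : ℕ) : ℝ) ^ K / (Nat.factorial K : ℝ)
        ≤ ((d * 2 ^ m : ℕ) : ℝ) ^ K / (Real.sqrt (2 * π * K) * ((K : ℝ) / Real.exp 1) ^ K) := by
      gcongr
    calc (Nat.choose (d * 2 ^ m) K : ℝ) * x ^ K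
        ≤ (((d * 2 ^ m : ℕ) : ℝ) ^ K / (Real.sqrt (2 * π * K) * ((K : ℝ) / Real.exp 1) ^ K)) * x ^ K := by
          apply mul_le_mul_of_nonneg_right (le_trans hb1 hb2) (pow_nonneg hx_pos.le K)
      _ = (((d * 2 ^ m : ℕ) : ℝ) * x) ^ K / (Real.sqrt (2 * π * K) * ((K : ℝ) / Real.exp 1) ^ K) := by
          rw [mul_pow]; ring
      _ ≤ ((K:ℝ)) ^ K / (Real.sqrt (2 * π * K) * ((K : ℝ) / Real.exp 1) ^ K) := by
          gcongr
          rw [hNx]; exact hxK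
      _ = Real.exp 1 ^ K / Real.sqrt (2 * π * K) := by
          rw [div_pow]
          field_simp
  -- numeric exp facts
  have hexp1 : Real.exp 1 ≤ 2.7182818286 := Real.exp_one_lt_d9.le
  have hexp4 : Real.exp 4 ≤ 55 := by
    calc Real.exp 4 = Real.exp 1 ^ 4 := by
          rw [← Real.exp_nat_mul]; norm_num
      _ ≤ 2.7182818286 ^ 4 := pow_le_pow_left₀ (Real.exp_pos 1).le hexp1 4
      _ ≤ 55 := by norm_num
  have hexp6 : Real.exp 6 ≤ 404 := by
    calc Real.exp 6 = Real.exp 1 ^ 6 := by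
          rw [← Real.exp_nat_mul]; norm_num
      _ ≤ 2.7182818286 ^ 6 := pow_le_pow_left₀ (Real.exp_pos 1).le hexp1 6
      _ ≤ 404 := by norm_num
  have hπ3 : (3:ℝ) < π := Real.pi_gt_three
  -- core inequality
  have hKr : (K:ℝ) = 3*(q:ℝ) + (r:ℝ) := by rw [hKdef]; push_cast; ring
  have hK12R : (12:ℝ) ≤ (K:ℝ) := by exact_mod_cast hK12
  have hcore : (2:ℝ) ^ (c*n*i) * 2 ^ (2*(c*n)) * (Real.exp 1 ^ K * x ^ q)
      ≤ Real.sqrt (2*π*K) := by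
    have hlhs : (0:ℝ) < 2 ^ (c*n*i) * 2 ^ (2*(c*n)) * (Real.exp 1 ^ K * x ^ q) := by
      have := pow_pos hx_pos q; positivity
    rw [← Real.log_le_log_iff hlhs hsqS]
    rw [Real.log_mul (by positivity) (ne_of_gt (mul_pos (pow_pos (Real.exp_pos 1) K) (pow_pos hx_pos q))),
        Real.log_mul (by positivity) (by positivity),
        Real.log_mul (ne_of_gt (pow_pos (Real.exp_pos 1) K)) (ne_of_gt (pow_pos hx_pos q)),
        Real.log_pow, Real.log_pow, Real.log_pow, Real.log_pow, Real.log_sqrt (by positivity),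
        Real.log_exp]
    -- prepared facts
    have hl2nn : (0:ℝ) ≤ Real.log 2 := by linarith
    have hqlog : (q:ℝ) * Real.log x ≤ (q:ℝ) * (-3 - n * Real.log 2) :=
      mul_le_mul_of_nonneg_left hx_log (by positivity)
    have h2ciR : ((2*(c*i) : ℕ):ℝ) ≤ (q:ℝ) := by exact_mod_cast h2ciq
    have hnq : (n:ℝ) * ((2*(c*i):ℕ):ℝ) ≤ (n:ℝ) * q :=
      mul_le_mul_of_nonneg_left h2ciR (by positivity)
    have hnql2 : (n:ℝ) * ((2*(c*i):ℕ):ℝ) * Real.log 2 ≤ (n:ℝ) * q * Real.log 2 :=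
      mul_le_mul_of_nonneg_right hnq hl2nn
    have hcast1 : (n:ℝ) * ((2*(c*i):ℕ):ℝ) = 2*(c:ℝ)*n*i := by push_cast; ring
    have h2cn_cni : ((2*(c*n) : ℕ):ℝ) ≤ ((c*n*i : ℕ):ℝ) := by
      have : 2*(c*n) ≤ c*n*i := by
        calc 2*(c*n) = (c*n)*2 := by ring
          _ ≤ (c*n)*i := Nat.mul_le_mul_left _ hi2
          _ = c*n*i := by ring
      exact_mod_cast this
    have hBl2 : ((2*(c*n):ℕ):ℝ) * Real.log 2 ≤ ((c*n*i:ℕ):ℝ) * Real.log 2 :=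
      mul_le_mul_of_nonneg_right h2cn_cni hl2nn
    rcases (by omega : r ≤ 2 ∨ r = 3) with hrc | hrc
    · -- r ≤ 2 case
      have hrR : (r:ℝ) ≤ 2 := by exact_mod_cast hrc
      have hlog4 : (4:ℝ) ≤ Real.log (2*π*K) := by
        rw [Real.le_log_iff_exp_le (by positivity)]
        have t1 : 2*π*12 ≤ 2*π*(K:ℝ) := by
          have := mul_le_mul_of_nonneg_left hK12R (by positivity : (0:ℝ) ≤ 2*π)
          linarith
        have t2 : (72:ℝ) ≤ 2*π*12 := by linarith
        linarith [hexp4]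
      push_cast at hBl2 hcast1 hnql2 ⊢
      linarith [hqlog, hnql2, hcast1.ge, hcast1.le, hBl2, hrR, hlog4, hKr]
    · -- r = 3 case
      have hi3 : 3 ≤ i := by
        rcases Nat.even_or_odd i with he | ho
        · exfalso
          obtain ⟨t, ht⟩ := he
          have hu : d * i = 2 * (d * t) := by rw [ht]; ring
          have key : 4 * q + r = 2 * (d * t) := hqr.trans hu
          omega
        · obtain ⟨t, ht⟩ := ho
          omega
      have hci3 : 3 ≤ c * i := le_trans (by omega) (Nat.mul_le_mul hc hi3)
      have hq6 : 6 ≤ q := by omega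
      have hK21R : (21:ℝ) ≤ (K:ℝ) := by
        have : 21 ≤ K := by omega
        exact_mod_cast this
      have hrR : (r:ℝ) = 3 := by exact_mod_cast hrc
      have hlog6 : 6 - 2*Real.log 2 ≤ Real.log (2*π*K) := by
        rw [Real.le_log_iff_exp_le (by positivity)]
        have h4 : Real.exp (2*Real.log 2) = 4 := by
          rw [show (2:ℝ)*Real.log 2 = Real.log 4 by
                rw [show (4:ℝ) = 2^2 by norm_num, Real.log_pow]; push_cast; ring,
              Real.exp_log (by norm_num)]
        have heq : Real.exp (6 - 2*Real.log 2) = Real.exp 6 / 4 := by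
          rw [Real.exp_sub, h4]
        rw [heq]
        have t1 : 2*π*21 ≤ 2*π*(K:ℝ) := by
          have := mul_le_mul_of_nonneg_left hK21R (by positivity : (0:ℝ) ≤ 2*π)
          linarith
        have t2 : (126:ℝ) ≤ 2*π*21 := by linarith
        linarith [hexp6]
      -- cni ≥ 3cn
      have h3cn_cni : ((3*(c*n) : ℕ):ℝ) ≤ ((c*n*i : ℕ):ℝ) := by
        have : 3*(c*n) ≤ c*n*i := by
          calc 3*(c*n) = (c*n)*3 := by ring
            _ ≤ (c*n)*i := Nat.mul_le_mul_left _ hi3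
            _ = c*n*i := by ring
        exact_mod_cast this
      have h3Bl2 : ((3*(c*n):ℕ):ℝ) * Real.log 2 ≤ ((c*n*i:ℕ):ℝ) * Real.log 2 :=
        mul_le_mul_of_nonneg_right h3cn_cni hl2nn
      have hcn1 : (1:ℝ) ≤ ((c*n:ℕ):ℝ) := by
        exact_mod_cast Nat.one_le_iff_ne_zero.2 (by positivity)
      have hcnl2 : Real.log 2 ≤ ((c*n:ℕ):ℝ) * Real.log 2 := by
        have := mul_le_mul_of_nonneg_right hcn1 hl2nn
        linarith
      push_cast at h3Bl2 hcast1 hnql2 hcnl2 ⊢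
      linarith [hqlog, hnql2, hcast1.ge, hcast1.le, h3Bl2, hrR.ge, hrR.le, hlog6, hcnl2, hKr]
  -- assembly
  rw [hKceil, show d*i = K + q from hKL.symm, pow_add]
  have hSnn : (0:ℝ) ≤ 2*π*K := by positivity
  calc (Nat.choose (2 ^ (c * n)) i : ℝ) * (Nat.choose (d * 2 ^ m) K : ℝ) * (x ^ K * x ^ q)
      = ((Nat.choose (2 ^ (c * n)) i : ℝ) * ((Nat.choose (d * 2 ^ m) K : ℝ) * x ^ K)) * x ^ q := by
        ring
    _ ≤ (((2:ℝ) ^ (c*n*i) / 2 ^ (i-1)) * (Real.exp 1 ^ K / Real.sqrt (2*π*K))) * x ^ q := by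
        apply mul_le_mul_of_nonneg_right _ (pow_nonneg hx_pos.le q)
        exact mul_le_mul hc1 hc2
          (mul_nonneg (Nat.cast_nonneg _) (pow_nonneg hx_pos.le K)) (by positivity)
    _ ≤ ((2:ℝ) ^ (2*(c*n)))⁻¹ * (1/2) ^ (i - 1) := by
        have hkey : ((2:ℝ) ^ (c*n*i) / 2 ^ (i-1)) * (Real.exp 1 ^ K / Real.sqrt (2*π*K)) * x ^ q
            = ((2:ℝ)^(c*n*i) * 2^(2*(c*n)) * (Real.exp 1^K * x^q)) / Real.sqrt (2*π*K)
              * ((2:ℝ)^(2*(c*n)))⁻¹ * ((2:ℝ)^(i-1))⁻¹ := by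
          field_simp
        rw [hkey, show ((1:ℝ)/2)^(i-1) = ((2:ℝ)^(i-1))⁻¹ by rw [one_div, inv_pow]]
        have h1 : ((2:ℝ)^(c*n*i) * 2^(2*(c*n)) * (Real.exp 1^K * x^q)) / Real.sqrt (2*π*K) ≤ 1 :=
          (div_le_one hsqS).2 hcore
        calc ((2:ℝ)^(c*n*i) * 2^(2*(c*n)) * (Real.exp 1^K * x^q)) / Real.sqrt (2*π*K)
              * ((2:ℝ)^(2*(c*n)))⁻¹ * ((2:ℝ)^(i-1))⁻¹
            ≤ 1 * ((2:ℝ)^(2*(c*n)))⁻¹ * ((2:ℝ)^(i-1))⁻¹ := by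
              apply mul_le_mul_of_nonneg_right
                (mul_le_mul_of_nonneg_right h1 (by positivity)) (by positivity)
          _ = ((2:ℝ)^(2*(c*n)))⁻¹ * ((2:ℝ)^(i-1))⁻¹ := by ring

/-- The union-bound computation in the proof of Lemma 2 (majority-unique case):
for `m ≥ n + κ + 4` and `d ≥ 8c`,
`∑_{i=2}^{2^κ} C(2^{cn}, i) · C(d·2^m, ⌈(3/4)di⌉) · ((3/4)di/(d·2^m))^{di} ≤ 2^{−2cn}`. -/
theorem stmt10 (c n κ m d : ℕ) (hc : 0 < c) (hn : 0 < n) (hκ : 0 < κ)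
    (hm : n + κ + 4 ≤ m) (hd : 8 * c ≤ d) :
    ∑ i ∈ Finset.Icc 2 (2 ^ κ),
        ((Nat.choose (2 ^ (c * n)) i : ℝ)
          * (Nat.choose (d * 2 ^ m) (Nat.ceil ((3 / 4 : ℝ) * d * i)) : ℝ)
          * (((3 / 4 : ℝ) * d * i) / ((d : ℝ) * 2 ^ m)) ^ (d * i))
      ≤ (2 : ℝ) ^ (-(2 * c * n : ℝ)) := by
  have hrpow : (2 : ℝ) ^ (-(2 * c * n : ℝ)) = ((2:ℝ) ^ (2 * (c * n)))⁻¹ := by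
    rw [Real.rpow_neg (by norm_num)]
    congr 1
    rw [show ((2:ℝ) * c * n) = ((2*(c*n) : ℕ) : ℝ) by push_cast; ring, Real.rpow_natCast]
  rw [hrpow]
  have hinv : (0:ℝ) ≤ ((2:ℝ) ^ (2 * (c * n)))⁻¹ := by positivity
  calc ∑ i ∈ Finset.Icc 2 (2 ^ κ),
        ((Nat.choose (2 ^ (c * n)) i : ℝ)
          * (Nat.choose (d * 2 ^ m) (Nat.ceil ((3 / 4 : ℝ) * d * i)) : ℝ)
          * (((3 / 4 : ℝ) * d * i) / ((d : ℝ) * 2 ^ m)) ^ (d * i))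
      ≤ ∑ i ∈ Finset.Icc 2 (2 ^ κ), ((2:ℝ) ^ (2 * (c * n)))⁻¹ * (1/2) ^ (i - 1) := by
        apply Finset.sum_le_sum
        intro i hi
        have h2 := Finset.mem_Icc.1 hi
        exact per_term c n κ m d i hc hn hκ hm hd h2.1 h2.2
    _ = ((2:ℝ) ^ (2 * (c * n)))⁻¹ * ∑ i ∈ Finset.Icc 2 (2 ^ κ), ((1:ℝ)/2) ^ (i - 1) := by
        rw [Finset.mul_sum]
    _ ≤ ((2:ℝ) ^ (2 * (c * n)))⁻¹ * 1 := by
        apply mul_le_mul_of_nonneg_left _ hinv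
        calc (∑ i ∈ Finset.Icc 2 (2^κ), ((1:ℝ)/2)^(i-1)) ≤ 1 - (1/2)^(2^κ - 1) := my_geo _
          _ ≤ 1 := by
            have : (0:ℝ) ≤ (1/2)^(2^κ - 1) := by positivity
            linarith
    _ = ((2:ℝ) ^ (2 * (c * n)))⁻¹ := by ring
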